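/- Let B be a symmetric Segal Fréchet algebra in a Fréchet algebra A, and assume B has left approximate units: for each b ∈ B, m ∈ ℕ, ε > 0 there exists u ∈ B with q_m(b − ub) < ε. If I is a closed left ideal in B, then I = cl_A(I) ∩ B. -/

import Mathlib

/-- If `B` is a symmetric Segal Fréchet algebra in `A` having left approximate units,
then every closed left ideal `I` of `B` satisfies `I = cl_A(I) ∩ B`. -/
theorem stmt_14 {A B : Type*}
    [Ring A] [Algebra ℂ A] [UniformSpace A] [IsUniformAddGroup A] [CompleteSpace A]
    [Ring B] [Algebra ℂ B] [UniformSpace B] [IsUniformAddGroup B] [CompleteSpace B]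
    (p : SeminormFamily ℂ A ℕ) (q : SeminormFamily ℂ B ℕ)
    (hp : WithSeminorms p) (hq : WithSeminorms q)
    (hpmono : Monotone p) (hqmono : Monotone q)
    (hpsub : ∀ (ℓ : ℕ) (a a' : A), p ℓ (a * a') ≤ p ℓ a * p ℓ a')
    (hqsub : ∀ (m : ℕ) (b b' : B), q m (b * b') ≤ q m b * q m b')
    (j : B →ₗ[ℂ] A) (hjinj : Function.Injective j)
    (hjmul : ∀ b b' : B, j (b * b') = j b * j b')
    (hdense : DenseRange j) (hjcont : Continuous j)
    (hideal_l : ∀ (a : A) (b : B), ∃ c : B, j c = a * j b)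
    (hideal_r : ∀ (a : A) (b : B), ∃ c : B, j c = j b * a)
    (hmul_l : ∀ m : ℕ, ∃ C : ℝ, 0 < C ∧ ∃ ℓ n : ℕ, ∀ (a : A) (b c : B),
      j c = a * j b → q m c ≤ C * p ℓ a * q n b)
    (hmul_r : ∀ m : ℕ, ∃ C : ℝ, 0 < C ∧ ∃ ℓ n : ℕ, ∀ (a : A) (b c : B),
      j c = j b * a → q m c ≤ C * p ℓ a * q n b)
    (hunits : ∀ b : B, ∀ m : ℕ, ∀ ε > (0 : ℝ), ∃ u : B, q m (b - u * b) < ε)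
    (I : Set B) (hIclosed : IsClosed I) (hI : ∀ b : B, ∀ x ∈ I, b * x ∈ I) :
    ∀ b : B, b ∈ I ↔ j b ∈ closure (j '' I) := by
  intro b
  constructor
  · intro hb
    exact subset_closure ⟨b, hb, rfl⟩
  · intro hb
    rw [← hIclosed.closure_eq]
    rw [mem_closure_iff_nhds_basis hq.hasBasis_ball]
    rintro ⟨s, r⟩ (hr : 0 < r)
    set m := s.sup id with hm
    have hsup : ∀ x : B, (s.sup q) x ≤ q m x := by
      intro x
      have : s.sup q ≤ q m := Finset.sup_le fun i hi => hqmono (Finset.le_sup (f := id) hi)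
      exact this x
    obtain ⟨u, hu⟩ := hunits b m (r / 2) (by linarith)
    obtain ⟨C, hC, ℓ, n, hmr⟩ := hmul_r m
    have hqnu : 0 ≤ q n u := apply_nonneg _ _
    have hden : 0 < C * q n u + 1 := by positivity
    set δ := (r / 2) / (C * q n u + 1) with hδ
    have hδpos : 0 < δ := by positivity
    obtain ⟨a, ha, hball⟩ := (mem_closure_iff_nhds_basis hp.hasBasis_ball).mp hb ⟨{ℓ}, δ⟩ hδpos
    obtain ⟨y, hy, rfl⟩ := ha
    have hdist : p ℓ (j y - j b) < δ := by
      have := hball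
      rwa [Seminorm.mem_ball, Finset.sup_singleton] at this
    have key : q m (u * b - u * y) < r / 2 := by
      have hc : j (u * b - u * y) = j u * (j b - j y) := by
        rw [map_sub, hjmul, hjmul, mul_sub]
      have h1 : q m (u * b - u * y) ≤ C * p ℓ (j b - j y) * q n u := hmr _ _ _ hc
      have h2 : p ℓ (j b - j y) ≤ δ := by
        rw [← map_sub_rev]
        exact le_of_lt hdist
      calc q m (u * b - u * y) ≤ C * p ℓ (j b - j y) * q n u := h1
        _ ≤ C * δ * q n u := by
            apply mul_le_mul_of_nonneg_right _ hqnu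
            exact mul_le_mul_of_nonneg_left h2 (le_of_lt hC)
        _ = (C * q n u) * δ := by ring
        _ < (C * q n u + 1) * δ := by nlinarith
        _ = r / 2 := by rw [hδ]; field_simp
    refine ⟨u * y, hI u y hy, ?_⟩
    rw [Seminorm.mem_ball]
    calc (s.sup q) (u * y - b) ≤ q m (u * y - b) := hsup _
      _ = q m (b - u * y) := map_sub_rev _ _ _
      _ ≤ q m (b - u * b) + q m (u * b - u * y) := by
          have : b - u * y = (b - u * b) + (u * b - u * y) := by abel
          rw [this]; exact map_add_le_add _ _ _
      _ < r / 2 + r / 2 := add_lt_add hu key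
      _ = r := by ring
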